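/- Let C and D be separable Frobenius monoids in a monoidal category V. Let X be a right C-comodule with coaction δᵣ : X ⟶ X ⊗ C, let Y be a (C, D)-bicomodule with left C-coaction λ_Y : Y ⟶ C ⊗ Y and right D-coaction ρ_Y : Y ⟶ Y ⊗ D which commute with each other, and let Z be a left D-comodule with coaction λ_Z : Z ⟶ D ⊗ Z. On X ⊗ Y ⊗ Z define the idempotents a₁ := a_{X,Y} ⊗ 1_Z and a₂ := 1_X ⊗ a_{Y,Z}, where a_{X,Y} := (1 ⊗ ε_C ⊗ 1) ∘ (1 ⊗ μ_C ⊗ 1) ∘ (δᵣ ⊗ λ_Y) and a_{Y,Z} := (1 ⊗ ε_D ⊗ 1) ∘ (1 ⊗ μ_D ⊗ 1) ∘ (ρ_Y ⊗ λ_Z) (associators suppressed). Then a₁ ∘ a₂ = a₂ ∘ a₁, the composite d := a₁ ∘ a₂ is idempotent, and for every splitting of d (p : X ⊗ Y ⊗ Z ⟶ W, i : W ⟶ X ⊗ Y ⊗ Z with i ∘ p = d, p ∘ i = 1_W): the morphism i equalizes both parallel pairs (δᵣ ⊗ 1_Y ⊗ 1_Z, 1_X ⊗ λ_Y ⊗ 1_Z)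 and (1_X ⊗ ρ_Y ⊗ 1_Z, 1_X ⊗ 1_Y ⊗ λ_Z), and any morphism h : V ⟶ X ⊗ Y ⊗ Z equalizing both pairs factors uniquely through i. (This computes the threefold cotensor product X ⊗_C Y ⊗_D Z as the splitting of the idempotent d.) -/

import Mathlib

open CategoryTheory MonoidalCategory CategoryTheory.Limits

/-- A separable Frobenius monoid in a monoidal category `V`. -/
structure SeparableFrobenius (V : Type*) [Category V] [MonoidalCategory V] where
  C : V
  mul : C ⊗ C ⟶ C
  one : 𝟙_ V ⟶ C
  comul : C ⟶ C ⊗ C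
  counit : C ⟶ 𝟙_ V
  mul_assoc : (mul ▷ C) ≫ mul = (α_ C C C).hom ≫ (C ◁ mul) ≫ mul
  one_mul : (one ▷ C) ≫ mul = (λ_ C).hom
  mul_one : (C ◁ one) ≫ mul = (ρ_ C).hom
  comul_coassoc : comul ≫ (C ◁ comul) = comul ≫ (comul ▷ C) ≫ (α_ C C C).hom
  counit_comul : comul ≫ (counit ▷ C) = (λ_ C).inv
  comul_counit : comul ≫ (C ◁ counit) = (ρ_ C).inv
  frobenius₁ : (comul ▷ C) ≫ (α_ C C C).hom ≫ (C ◁ mul) = mul ≫ comul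
  frobenius₂ : (C ◁ comul) ≫ (α_ C C C).inv ≫ (mul ▷ C) = mul ≫ comul
  separable : comul ≫ mul = 𝟙 C

namespace CotAux

variable {V : Type*} [Category V] [MonoidalCategory V]

lemma frob_contract_left (F : SeparableFrobenius V) :
    (F.comul ▷ F.C) ≫ (α_ F.C F.C F.C).hom ≫ (F.C ◁ F.mul) ≫ (F.C ◁ F.counit) ≫
      (ρ_ F.C).hom = F.mul := by
  rw [reassoc_of% F.frobenius₁, reassoc_of% F.comul_counit]
  simp

lemma frob_contract_right (F : SeparableFrobenius V) :
    (F.C ◁ F.comul) ≫ (α_ F.C F.C F.C).inv ≫ (F.mul ▷ F.C) ≫ (F.counit ▷ F.C) ≫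
      (λ_ F.C).hom = F.mul := by
  rw [reassoc_of% F.frobenius₂, reassoc_of% F.counit_comul]
  simp

section

variable (F : SeparableFrobenius V) {X Y : V} (δr : X ⟶ X ⊗ F.C) (lY : Y ⟶ F.C ⊗ Y)

/-- The cotensor contraction idempotent on `X ⊗ Y`. -/
def cotA : X ⊗ Y ⟶ X ⊗ Y :=
  (δr ⊗ₘ lY) ≫ (α_ X F.C (F.C ⊗ Y)).hom ≫ (X ◁ (α_ F.C F.C Y).inv) ≫
    (X ◁ (F.mul ▷ Y)) ≫ (X ◁ (F.counit ▷ Y)) ≫ (X ◁ (λ_ Y).hom)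

/-- Contraction of the left coaction against a `C`-wire on the left. -/
def cotPhi : F.C ⊗ Y ⟶ Y :=
  (F.C ◁ lY) ≫ (α_ F.C F.C Y).inv ≫ (F.mul ▷ Y) ≫ (F.counit ▷ Y) ≫ (λ_ Y).hom

/-- Contraction of the right coaction against a `C`-wire on the right. -/
def cotTheta : X ⊗ F.C ⟶ X :=
  (δr ▷ F.C) ≫ (α_ X F.C F.C).hom ≫ (X ◁ F.mul) ≫ (X ◁ F.counit) ≫ (ρ_ X).hom

lemma cotA_eq : cotA F δr lY = (δr ▷ Y) ≫ (α_ X F.C Y).hom ≫ (X ◁ cotPhi F lY) := by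
  rw [cotA, cotPhi, MonoidalCategory.tensorHom_def]
  monoidal

lemma cotA_eq' : cotA F δr lY = (X ◁ lY) ≫ (α_ X F.C Y).inv ≫ (cotTheta F δr ▷ Y) := by
  rw [cotA, cotTheta, tensorHom_def']
  monoidal


lemma phi_lY (hco : lY ≫ (F.C ◁ lY) = lY ≫ (F.comul ▷ Y) ≫ (α_ F.C F.C Y).hom)
    (hcu : lY ≫ (F.counit ▷ Y) = (λ_ Y).inv) :
    lY ≫ cotPhi F lY = 𝟙 Y := by
  rw [cotPhi, reassoc_of% hco]
  rw [Iso.hom_inv_id_assoc, ← comp_whiskerRight_assoc, F.separable,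
    MonoidalCategory.id_whiskerRight, Category.id_comp, reassoc_of% hcu]
  simp

lemma phi_comp_lY (hco : lY ≫ (F.C ◁ lY) = lY ≫ (F.comul ▷ Y) ≫ (α_ F.C F.C Y).hom) :
    cotPhi F lY ≫ lY = (F.C ◁ lY) ≫ (α_ F.C F.C Y).inv ≫ (F.mul ▷ Y) := by
  rw [cotPhi]
  slice_lhs 5 6 => rw [← leftUnitor_naturality]
  slice_lhs 4 5 => rw [← whisker_exchange]
  slice_lhs 3 4 => rw [← whisker_exchange]
  have step : (F.C ◁ lY) ≫ (α_ F.C F.C Y).inv ≫ ((F.C ⊗ F.C) ◁ lY)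
      = (F.C ◁ (lY ≫ (F.C ◁ lY))) ≫ (α_ F.C F.C (F.C ⊗ Y)).inv := by
    monoidal
  slice_lhs 1 3 => rw [step]
  rw [hco]
  calc _ = (F.C ◁ lY) ≫ (α_ F.C F.C Y).inv ≫
        (((F.C ◁ F.comul) ≫ (α_ F.C F.C F.C).inv ≫ (F.mul ▷ F.C) ≫ (F.counit ▷ F.C) ≫
          (λ_ F.C).hom) ▷ Y) := by monoidal
    _ = (F.C ◁ lY) ≫ (α_ F.C F.C Y).inv ≫ (F.mul ▷ Y) := by
        rw [frob_contract_right]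

lemma theta_comp_dr
    (hco : δr ≫ (X ◁ F.comul) = δr ≫ (δr ▷ F.C) ≫ (α_ X F.C F.C).hom) :
    cotTheta F δr ≫ δr = (δr ▷ F.C) ≫ (α_ X F.C F.C).hom ≫ (X ◁ F.mul) := by
  rw [cotTheta]
  slice_lhs 5 6 => rw [← rightUnitor_naturality]
  slice_lhs 4 5 => rw [whisker_exchange]
  slice_lhs 3 4 => rw [whisker_exchange]
  have step : (δr ▷ F.C) ≫ (α_ X F.C F.C).hom ≫ (δr ▷ (F.C ⊗ F.C))
      = ((δr ≫ (δr ▷ F.C)) ▷ F.C) ≫ (α_ (X ⊗ F.C) F.C F.C).hom := by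
    monoidal
  slice_lhs 1 3 => rw [step]
  have hco' : δr ≫ (δr ▷ F.C) = δr ≫ (X ◁ F.comul) ≫ (α_ X F.C F.C).inv := by
    rw [reassoc_of% hco]; simp
  rw [hco']
  calc _ = (δr ▷ F.C) ≫ (α_ X F.C F.C).hom ≫
        (X ◁ ((F.comul ▷ F.C) ≫ (α_ F.C F.C F.C).hom ≫ (F.C ◁ F.mul) ≫ (F.C ◁ F.counit) ≫
          (ρ_ F.C).hom)) := by monoidal
    _ = (δr ▷ F.C) ≫ (α_ X F.C F.C).hom ≫ (X ◁ F.mul) := by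
        rw [frob_contract_left]

lemma cotA_equalizes
    (hXco : δr ≫ (X ◁ F.comul) = δr ≫ (δr ▷ F.C) ≫ (α_ X F.C F.C).hom)
    (hlYco : lY ≫ (F.C ◁ lY) = lY ≫ (F.comul ▷ Y) ≫ (α_ F.C F.C Y).hom) :
    cotA F δr lY ≫ (δr ▷ Y) ≫ (α_ X F.C Y).hom = cotA F δr lY ≫ (X ◁ lY) := by
  conv_lhs => rw [cotA_eq']
  conv_rhs => rw [cotA_eq]
  simp only [Category.assoc]
  rw [← comp_whiskerRight_assoc, theta_comp_dr F δr hXco,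
    ← MonoidalCategory.whiskerLeft_comp, phi_comp_lY F lY hlYco]
  calc (X ◁ lY) ≫ (α_ X F.C Y).inv ≫
        (((δr ▷ F.C) ≫ (α_ X F.C F.C).hom ≫ (X ◁ F.mul)) ▷ Y) ≫ (α_ X F.C Y).hom
      = (X ◁ lY) ≫ (δr ▷ (F.C ⊗ Y)) ≫ (α_ X F.C (F.C ⊗ Y)).hom ≫
          (X ◁ (α_ F.C F.C Y).inv) ≫ (X ◁ (F.mul ▷ Y)) := by monoidal
    _ = (δr ▷ Y) ≫ ((X ⊗ F.C) ◁ lY) ≫ (α_ X F.C (F.C ⊗ Y)).hom ≫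
          (X ◁ (α_ F.C F.C Y).inv) ≫ (X ◁ (F.mul ▷ Y)) := by
        rw [whisker_exchange_assoc]
    _ = (δr ▷ Y) ≫ (α_ X F.C Y).hom ≫
          (X ◁ ((F.C ◁ lY) ≫ (α_ F.C F.C Y).inv ≫ (F.mul ▷ Y))) := by monoidal

lemma cotA_absorb {W : V} (h : W ⟶ X ⊗ Y)
    (hlYco : lY ≫ (F.C ◁ lY) = lY ≫ (F.comul ▷ Y) ≫ (α_ F.C F.C Y).hom)
    (hlYcu : lY ≫ (F.counit ▷ Y) = (λ_ Y).inv)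
    (heq : h ≫ (δr ▷ Y) ≫ (α_ X F.C Y).hom = h ≫ (X ◁ lY)) :
    h ≫ cotA F δr lY = h := by
  rw [cotA_eq]
  rw [reassoc_of% heq, ← MonoidalCategory.whiskerLeft_comp,
    phi_lY F lY hlYco hlYcu]
  simp

lemma cotA_idem
    (hXco : δr ≫ (X ◁ F.comul) = δr ≫ (δr ▷ F.C) ≫ (α_ X F.C F.C).hom)
    (hlYco : lY ≫ (F.C ◁ lY) = lY ≫ (F.comul ▷ Y) ≫ (α_ F.C F.C Y).hom)
    (hlYcu : lY ≫ (F.counit ▷ Y) = (λ_ Y).inv) :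
    cotA F δr lY ≫ cotA F δr lY = cotA F δr lY :=
  cotA_absorb F δr lY _ hlYco hlYcu (cotA_equalizes F δr lY hXco hlYco)

end

section Bicomod

variable (FC FD : SeparableFrobenius V) {X Y Z : V}
variable (lY : Y ⟶ FC.C ⊗ Y) (rY : Y ⟶ Y ⊗ FD.C) (lZ : Z ⟶ FD.C ⊗ Z)

lemma phi_comp_rY
    (hbi : lY ≫ (FC.C ◁ rY) = rY ≫ (lY ▷ FD.C) ≫ (α_ FC.C Y FD.C).hom) :
    cotPhi FC lY ≫ rY
      = (FC.C ◁ rY) ≫ (α_ FC.C Y FD.C).inv ≫ (cotPhi FC lY ▷ FD.C) := by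
  rw [cotPhi]
  slice_lhs 5 6 => rw [← leftUnitor_naturality]
  slice_lhs 4 5 => rw [← whisker_exchange]
  slice_lhs 3 4 => rw [← whisker_exchange]
  have step : (FC.C ◁ lY) ≫ (α_ FC.C FC.C Y).inv ≫ ((FC.C ⊗ FC.C) ◁ rY)
      = (FC.C ◁ (lY ≫ (FC.C ◁ rY))) ≫ (α_ FC.C FC.C (Y ⊗ FD.C)).inv := by
    monoidal
  slice_lhs 1 3 => rw [step]
  rw [hbi]
  calc _ = (FC.C ◁ rY) ≫ (α_ FC.C Y FD.C).inv ≫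
        (((FC.C ◁ lY) ≫ (α_ FC.C FC.C Y).inv ≫ (FC.mul ▷ Y) ≫ (FC.counit ▷ Y) ≫
          (λ_ Y).hom) ▷ FD.C) := by monoidal
    _ = _ := by rw [← cotPhi]

lemma key_exchange
    (hbi : lY ≫ (FC.C ◁ rY) = rY ≫ (lY ▷ FD.C) ≫ (α_ FC.C Y FD.C).hom) :
    (cotPhi FC lY ▷ FD.C) ≫ cotTheta FD rY
      = (α_ FC.C Y FD.C).hom ≫ (FC.C ◁ cotTheta FD rY) ≫ cotPhi FC lY := by
  conv_lhs => rw [cotTheta]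
  rw [← comp_whiskerRight_assoc, phi_comp_rY FC FD lY rY hbi]
  calc _ = ((FC.C ◁ rY) ▷ FD.C) ≫ ((α_ FC.C Y FD.C).inv ▷ FD.C) ≫
        (α_ (FC.C ⊗ Y) FD.C FD.C).hom ≫ (cotPhi FC lY ▷ (FD.C ⊗ FD.C)) ≫
        (Y ◁ (FD.mul ≫ FD.counit)) ≫ (ρ_ Y).hom := by monoidal
    _ = ((FC.C ◁ rY) ▷ FD.C) ≫ ((α_ FC.C Y FD.C).inv ▷ FD.C) ≫
        (α_ (FC.C ⊗ Y) FD.C FD.C).hom ≫ ((FC.C ⊗ Y) ◁ (FD.mul ≫ FD.counit)) ≫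
        (cotPhi FC lY ▷ 𝟙_ V) ≫ (ρ_ Y).hom := by
        rw [← whisker_exchange_assoc]
    _ = ((FC.C ◁ rY) ▷ FD.C) ≫ ((α_ FC.C Y FD.C).inv ▷ FD.C) ≫
        (α_ (FC.C ⊗ Y) FD.C FD.C).hom ≫ ((FC.C ⊗ Y) ◁ (FD.mul ≫ FD.counit)) ≫
        (ρ_ (FC.C ⊗ Y)).hom ≫ cotPhi FC lY := by
        rw [rightUnitor_naturality]
    _ = (α_ FC.C Y FD.C).hom ≫ (FC.C ◁ ((rY ▷ FD.C) ≫ (α_ Y FD.C FD.C).hom ≫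
        (Y ◁ FD.mul) ≫ (Y ◁ FD.counit) ≫ (ρ_ Y).hom)) ≫ cotPhi FC lY := by monoidal
    _ = _ := by rw [← cotTheta]

lemma core_exchange
    (hbi : lY ≫ (FC.C ◁ rY) = rY ≫ (lY ▷ FD.C) ≫ (α_ FC.C Y FD.C).hom) :
    (cotPhi FC lY ▷ Z) ≫ cotA FD rY lZ
      = (α_ FC.C Y Z).hom ≫ (FC.C ◁ cotA FD rY lZ) ≫ (α_ FC.C Y Z).inv ≫
        (cotPhi FC lY ▷ Z) := by
  rw [cotA_eq' FD rY lZ]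
  calc _ = ((FC.C ⊗ Y) ◁ lZ) ≫ (cotPhi FC lY ▷ (FD.C ⊗ Z)) ≫ (α_ Y FD.C Z).inv ≫
        (cotTheta FD rY ▷ Z) := by
        rw [← whisker_exchange_assoc]
    _ = ((FC.C ⊗ Y) ◁ lZ) ≫ (α_ (FC.C ⊗ Y) FD.C Z).inv ≫
        (((cotPhi FC lY ▷ FD.C) ≫ cotTheta FD rY) ▷ Z) := by monoidal
    _ = ((FC.C ⊗ Y) ◁ lZ) ≫ (α_ (FC.C ⊗ Y) FD.C Z).inv ≫
        (((α_ FC.C Y FD.C).hom ≫ (FC.C ◁ cotTheta FD rY) ≫ cotPhi FC lY) ▷ Z) := by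
        rw [key_exchange FC FD lY rY hbi]
    _ = (α_ FC.C Y Z).hom ≫ (FC.C ◁ ((Y ◁ lZ) ≫ (α_ Y FD.C Z).inv ≫
        (cotTheta FD rY ▷ Z))) ≫ (α_ FC.C Y Z).inv ≫ (cotPhi FC lY ▷ Z) := by monoidal
    _ = _ := by rw [← cotA_eq' FD rY lZ]

lemma commute (δr : X ⟶ X ⊗ FC.C)
    (hbi : lY ≫ (FC.C ◁ rY) = rY ≫ (lY ▷ FD.C) ≫ (α_ FC.C Y FD.C).hom) :
    (cotA FC δr lY ▷ Z) ≫ (α_ X Y Z).hom ≫ (X ◁ cotA FD rY lZ) ≫ (α_ X Y Z).inv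
      = ((α_ X Y Z).hom ≫ (X ◁ cotA FD rY lZ) ≫ (α_ X Y Z).inv) ≫
        (cotA FC δr lY ▷ Z) := by
  conv_lhs => rw [cotA_eq FC δr lY]
  calc _ = (((δr ▷ Y) ≫ (α_ X FC.C Y).hom) ▷ Z) ≫ (α_ X (FC.C ⊗ Y) Z).hom ≫
        (X ◁ ((cotPhi FC lY ▷ Z) ≫ cotA FD rY lZ)) ≫ (α_ X Y Z).inv := by monoidal
    _ = (((δr ▷ Y) ≫ (α_ X FC.C Y).hom) ▷ Z) ≫ (α_ X (FC.C ⊗ Y) Z).hom ≫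
        (X ◁ ((α_ FC.C Y Z).hom ≫ (FC.C ◁ cotA FD rY lZ) ≫ (α_ FC.C Y Z).inv ≫
          (cotPhi FC lY ▷ Z))) ≫ (α_ X Y Z).inv := by
        rw [core_exchange FC FD lY rY lZ hbi]
    _ = (α_ X Y Z).hom ≫ (δr ▷ (Y ⊗ Z)) ≫ ((X ⊗ FC.C) ◁ cotA FD rY lZ) ≫
        (α_ X FC.C (Y ⊗ Z)).hom ≫ (X ◁ (α_ FC.C Y Z).inv) ≫
        (X ◁ (cotPhi FC lY ▷ Z)) ≫ (α_ X Y Z).inv := by monoidal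
    _ = (α_ X Y Z).hom ≫ (X ◁ cotA FD rY lZ) ≫ (δr ▷ (Y ⊗ Z)) ≫
        (α_ X FC.C (Y ⊗ Z)).hom ≫ (X ◁ (α_ FC.C Y Z).inv) ≫
        (X ◁ (cotPhi FC lY ▷ Z)) ≫ (α_ X Y Z).inv := by
        rw [whisker_exchange_assoc]
    _ = ((α_ X Y Z).hom ≫ (X ◁ cotA FD rY lZ) ≫ (α_ X Y Z).inv) ≫
        (((δr ▷ Y) ≫ (α_ X FC.C Y).hom ≫ (X ◁ cotPhi FC lY)) ▷ Z) := by monoidal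
    _ = _ := by rw [← cotA_eq FC δr lY]

end Bicomod

/-- Abstract splitting packaging. -/
lemma pack {T U U' : V} (A1 A2 : T ⟶ T) (F1 F2 : T ⟶ U) (G1 G2 : T ⟶ U')
    (hcomm : A1 ≫ A2 = A2 ≫ A1) (h1 : A1 ≫ A1 = A1) (h2 : A2 ≫ A2 = A2)
    (he1 : A1 ≫ F1 = A1 ≫ F2) (he2 : A2 ≫ G1 = A2 ≫ G2)
    (hb1 : ∀ {V'} (h : V' ⟶ T), h ≫ F1 = h ≫ F2 → h ≫ A1 = h)
    (hb2 : ∀ {V'} (h : V' ⟶ T), h ≫ G1 = h ≫ G2 → h ≫ A2 = h) :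
    (A1 ≫ A2 = A2 ≫ A1) ∧
    ((A2 ≫ A1) ≫ A2 ≫ A1 = A2 ≫ A1) ∧
    ∀ (W : V) (p : T ⟶ W) (i : W ⟶ T),
      p ≫ i = A2 ≫ A1 → i ≫ p = 𝟙 W →
      (i ≫ F1 = i ≫ F2) ∧ (i ≫ G1 = i ≫ G2) ∧
      ∀ (V' : V) (h : V' ⟶ T),
        h ≫ F1 = h ≫ F2 → h ≫ G1 = h ≫ G2 →
        ∃! k : V' ⟶ W, k ≫ i = h := by
  refine ⟨hcomm, ?_, ?_⟩
  · calc (A2 ≫ A1) ≫ A2 ≫ A1 = A2 ≫ (A1 ≫ A2) ≫ A1 := by simp only [Category.assoc]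
      _ = A2 ≫ (A2 ≫ A1) ≫ A1 := by rw [hcomm]
      _ = (A2 ≫ A2) ≫ (A1 ≫ A1) := by simp only [Category.assoc]
      _ = A2 ≫ A1 := by rw [h1, h2]
  · intro W p i hpi hip
    have hiD : i ≫ (A2 ≫ A1) = i := by
      rw [← hpi, ← Category.assoc, hip, Category.id_comp]
    refine ⟨?_, ?_, ?_⟩
    · calc i ≫ F1 = (i ≫ (A2 ≫ A1)) ≫ F1 := by rw [hiD]
        _ = (i ≫ A2) ≫ (A1 ≫ F1) := by simp only [Category.assoc]
        _ = (i ≫ A2) ≫ (A1 ≫ F2) := by rw [he1]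
        _ = (i ≫ (A2 ≫ A1)) ≫ F2 := by simp only [Category.assoc]
        _ = i ≫ F2 := by rw [hiD]
    · calc i ≫ G1 = (i ≫ (A2 ≫ A1)) ≫ G1 := by rw [hiD]
        _ = (i ≫ (A1 ≫ A2)) ≫ G1 := by rw [hcomm]
        _ = (i ≫ A1) ≫ (A2 ≫ G1) := by simp only [Category.assoc]
        _ = (i ≫ A1) ≫ (A2 ≫ G2) := by rw [he2]
        _ = (i ≫ (A1 ≫ A2)) ≫ G2 := by simp only [Category.assoc]
        _ = (i ≫ (A2 ≫ A1)) ≫ G2 := by rw [hcomm]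
        _ = i ≫ G2 := by rw [hiD]
    · intro V' h hf hg
      have hA1 := hb1 h hf
      have hA2 := hb2 h hg
      have hD : h ≫ (A2 ≫ A1) = h := by rw [← Category.assoc, hA2, hA1]
      refine ⟨h ≫ p, ?_, ?_⟩
      · show (h ≫ p) ≫ i = h
        rw [Category.assoc, hpi, hD]
      · intro k hk
        have hk' : k ≫ i = h := hk
        rw [← hk', Category.assoc, hip, Category.comp_id]

end CotAux

open CotAux in
set_option maxHeartbeats 1000000 in
/-- For separable Frobenius monoids `C`, `D`, a right `C`-comodule `X`,
a `(C, D)`-bicomodule `Y` and a left `D`-comodule `Z`, the cotensor idempotents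
`a₁ = a_{X,Y} ⊗ 1` and `a₂ = 1 ⊗ a_{Y,Z}` on `(X ⊗ Y) ⊗ Z` commute, their composite
`d = a₁ ∘ a₂` is idempotent, and any splitting `i : W ⟶ (X ⊗ Y) ⊗ Z` of `d` equalizes
both coaction pairs and is universal among morphisms doing so; thus it computes the
threefold cotensor product `X ⊗_C Y ⊗_D Z`. -/
theorem threefold_cotensor_as_splitting
    {V : Type*} [Category V] [MonoidalCategory V]
    (FC FD : SeparableFrobenius V)
    (X : V) (δr : X ⟶ X ⊗ FC.C)
    (hXcoassoc : δr ≫ (X ◁ FC.comul) = δr ≫ (δr ▷ FC.C) ≫ (α_ X FC.C FC.C).hom)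
    (hXcounit : δr ≫ (X ◁ FC.counit) = (ρ_ X).inv)
    (Y : V) (lY : Y ⟶ FC.C ⊗ Y) (rY : Y ⟶ Y ⊗ FD.C)
    (hlYcoassoc : lY ≫ (FC.C ◁ lY) = lY ≫ (FC.comul ▷ Y) ≫ (α_ FC.C FC.C Y).hom)
    (hlYcounit : lY ≫ (FC.counit ▷ Y) = (λ_ Y).inv)
    (hrYcoassoc : rY ≫ (Y ◁ FD.comul) = rY ≫ (rY ▷ FD.C) ≫ (α_ Y FD.C FD.C).hom)
    (hrYcounit : rY ≫ (Y ◁ FD.counit) = (ρ_ Y).inv)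
    (hbicomod : lY ≫ (FC.C ◁ rY) = rY ≫ (lY ▷ FD.C) ≫ (α_ FC.C Y FD.C).hom)
    (Z : V) (lZ : Z ⟶ FD.C ⊗ Z)
    (hZcoassoc : lZ ≫ (FD.C ◁ lZ) = lZ ≫ (FD.comul ▷ Z) ≫ (α_ FD.C FD.C Z).hom)
    (hZcounit : lZ ≫ (FD.counit ▷ Z) = (λ_ Z).inv) :
    letI aXY : X ⊗ Y ⟶ X ⊗ Y :=
      (δr ⊗ₘ lY) ≫ (α_ X FC.C (FC.C ⊗ Y)).hom ≫ (X ◁ (α_ FC.C FC.C Y).inv) ≫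
        (X ◁ (FC.mul ▷ Y)) ≫ (X ◁ (FC.counit ▷ Y)) ≫ (X ◁ (λ_ Y).hom)
    letI aYZ : Y ⊗ Z ⟶ Y ⊗ Z :=
      (rY ⊗ₘ lZ) ≫ (α_ Y FD.C (FD.C ⊗ Z)).hom ≫ (Y ◁ (α_ FD.C FD.C Z).inv) ≫
        (Y ◁ (FD.mul ▷ Z)) ≫ (Y ◁ (FD.counit ▷ Z)) ≫ (Y ◁ (λ_ Z).hom)
    letI a₁ : (X ⊗ Y) ⊗ Z ⟶ (X ⊗ Y) ⊗ Z := aXY ▷ Z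
    letI a₂ : (X ⊗ Y) ⊗ Z ⟶ (X ⊗ Y) ⊗ Z :=
      (α_ X Y Z).hom ≫ (X ◁ aYZ) ≫ (α_ X Y Z).inv
    letI d : (X ⊗ Y) ⊗ Z ⟶ (X ⊗ Y) ⊗ Z := a₂ ≫ a₁
    letI f₁ : (X ⊗ Y) ⊗ Z ⟶ (X ⊗ (FC.C ⊗ Y)) ⊗ Z := ((δr ▷ Y) ≫ (α_ X FC.C Y).hom) ▷ Z
    letI f₂ : (X ⊗ Y) ⊗ Z ⟶ (X ⊗ (FC.C ⊗ Y)) ⊗ Z := (X ◁ lY) ▷ Z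
    letI g₁ : (X ⊗ Y) ⊗ Z ⟶ ((X ⊗ Y) ⊗ FD.C) ⊗ Z := ((X ◁ rY) ≫ (α_ X Y FD.C).inv) ▷ Z
    letI g₂ : (X ⊗ Y) ⊗ Z ⟶ ((X ⊗ Y) ⊗ FD.C) ⊗ Z :=
      ((X ⊗ Y) ◁ lZ) ≫ (α_ (X ⊗ Y) FD.C Z).inv
    (a₁ ≫ a₂ = a₂ ≫ a₁) ∧
    (d ≫ d = d) ∧
    ∀ (W : V) (p : (X ⊗ Y) ⊗ Z ⟶ W) (i : W ⟶ (X ⊗ Y) ⊗ Z),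
      p ≫ i = d → i ≫ p = 𝟙 W →
      (i ≫ f₁ = i ≫ f₂) ∧ (i ≫ g₁ = i ≫ g₂) ∧
      ∀ (V' : V) (h : V' ⟶ (X ⊗ Y) ⊗ Z),
        h ≫ f₁ = h ≫ f₂ → h ≫ g₁ = h ≫ g₂ →
        ∃! k : V' ⟶ W, k ≫ i = h := by
  have haXY :
      ((δr ⊗ₘ lY) ≫ (α_ X FC.C (FC.C ⊗ Y)).hom ≫ (X ◁ (α_ FC.C FC.C Y).inv) ≫
        (X ◁ (FC.mul ▷ Y)) ≫ (X ◁ (FC.counit ▷ Y)) ≫ (X ◁ (λ_ Y).hom)) = cotA FC δr lY :=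
    rfl
  have haYZ :
      ((rY ⊗ₘ lZ) ≫ (α_ Y FD.C (FD.C ⊗ Z)).hom ≫ (Y ◁ (α_ FD.C FD.C Z).inv) ≫
        (Y ◁ (FD.mul ▷ Z)) ≫ (Y ◁ (FD.counit ▷ Z)) ≫ (Y ◁ (λ_ Z).hom)) = cotA FD rY lZ :=
    rfl
  simp only [haXY, haYZ]
  have hcomm : (cotA FC δr lY ▷ Z) ≫
        ((α_ X Y Z).hom ≫ (X ◁ cotA FD rY lZ) ≫ (α_ X Y Z).inv)
      = ((α_ X Y Z).hom ≫ (X ◁ cotA FD rY lZ) ≫ (α_ X Y Z).inv) ≫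
        (cotA FC δr lY ▷ Z) := by
    simpa only [Category.assoc] using commute FC FD lY rY lZ δr hbicomod
  have h1 : (cotA FC δr lY ▷ Z) ≫ (cotA FC δr lY ▷ Z) = cotA FC δr lY ▷ Z := by
    rw [← comp_whiskerRight, cotA_idem FC δr lY hXcoassoc hlYcoassoc hlYcounit]
  have h2 : ((α_ X Y Z).hom ≫ (X ◁ cotA FD rY lZ) ≫ (α_ X Y Z).inv) ≫
        ((α_ X Y Z).hom ≫ (X ◁ cotA FD rY lZ) ≫ (α_ X Y Z).inv)
      = (α_ X Y Z).hom ≫ (X ◁ cotA FD rY lZ) ≫ (α_ X Y Z).inv := by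
    simp only [Category.assoc, Iso.inv_hom_id_assoc,
      ← MonoidalCategory.whiskerLeft_comp_assoc]
    rw [cotA_idem FD rY lZ hrYcoassoc hZcoassoc hZcounit]
  have he1 : (cotA FC δr lY ▷ Z) ≫ ((((δr ▷ Y) ≫ (α_ X FC.C Y).hom)) ▷ Z)
      = (cotA FC δr lY ▷ Z) ≫ ((X ◁ lY) ▷ Z) := by
    rw [← comp_whiskerRight, ← comp_whiskerRight,
      cotA_equalizes FC δr lY hXcoassoc hlYcoassoc]
  have tg1 : (((X ◁ rY) ≫ (α_ X Y FD.C).inv) ▷ Z)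
      = (α_ X Y Z).hom ≫ (X ◁ ((rY ▷ Z) ≫ (α_ Y FD.C Z).hom)) ≫
        (X ◁ (α_ Y FD.C Z).inv) ≫ (α_ X (Y ⊗ FD.C) Z).inv ≫
        ((α_ X Y FD.C).inv ▷ Z) := by monoidal
  have tg2 : (((X ⊗ Y) ◁ lZ) ≫ (α_ (X ⊗ Y) FD.C Z).inv)
      = (α_ X Y Z).hom ≫ (X ◁ (Y ◁ lZ)) ≫
        (X ◁ (α_ Y FD.C Z).inv) ≫ (α_ X (Y ⊗ FD.C) Z).inv ≫
        ((α_ X Y FD.C).inv ▷ Z) := by monoidal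
  have he2 : ((α_ X Y Z).hom ≫ (X ◁ cotA FD rY lZ) ≫ (α_ X Y Z).inv) ≫
        (((X ◁ rY) ≫ (α_ X Y FD.C).inv) ▷ Z)
      = ((α_ X Y Z).hom ≫ (X ◁ cotA FD rY lZ) ≫ (α_ X Y Z).inv) ≫
        (((X ⊗ Y) ◁ lZ) ≫ (α_ (X ⊗ Y) FD.C Z).inv) := by
    rw [tg1, tg2]
    simp only [Category.assoc, Iso.inv_hom_id_assoc,
      ← MonoidalCategory.whiskerLeft_comp_assoc]
    rw [reassoc_of% (cotA_equalizes FD rY lZ hrYcoassoc hZcoassoc)]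
  have hb1 : ∀ {V'} (h : V' ⟶ (X ⊗ Y) ⊗ Z),
      h ≫ ((((δr ▷ Y) ≫ (α_ X FC.C Y).hom)) ▷ Z) = h ≫ ((X ◁ lY) ▷ Z) →
      h ≫ (cotA FC δr lY ▷ Z) = h := by
    intro V' h hf
    have hsplit : cotA FC δr lY ▷ Z
        = ((((δr ▷ Y) ≫ (α_ X FC.C Y).hom)) ▷ Z) ≫ ((X ◁ cotPhi FC lY) ▷ Z) := by
      rw [← comp_whiskerRight, Category.assoc, ← cotA_eq]
    rw [hsplit, reassoc_of% hf, ← comp_whiskerRight,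
      ← MonoidalCategory.whiskerLeft_comp, phi_lY FC lY hlYcoassoc hlYcounit]
    simp
  have hb2 : ∀ {V'} (h : V' ⟶ (X ⊗ Y) ⊗ Z),
      h ≫ (((X ◁ rY) ≫ (α_ X Y FD.C).inv) ▷ Z) =
        h ≫ (((X ⊗ Y) ◁ lZ) ≫ (α_ (X ⊗ Y) FD.C Z).inv) →
      h ≫ ((α_ X Y Z).hom ≫ (X ◁ cotA FD rY lZ) ≫ (α_ X Y Z).inv) = h := by
    intro V' h hg
    have tg1' : (α_ X Y Z).hom ≫ (X ◁ ((rY ▷ Z) ≫ (α_ Y FD.C Z).hom)) =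
        (((X ◁ rY) ≫ (α_ X Y FD.C).inv) ▷ Z) ≫ (((α_ X Y FD.C).hom ▷ Z) ≫
          (α_ X (Y ⊗ FD.C) Z).hom ≫ (X ◁ (α_ Y FD.C Z).hom)) := by monoidal
    have tg2' : (α_ X Y Z).hom ≫ (X ◁ (Y ◁ lZ)) =
        ((((X ⊗ Y) ◁ lZ) ≫ (α_ (X ⊗ Y) FD.C Z).inv)) ≫ (((α_ X Y FD.C).hom ▷ Z) ≫
          (α_ X (Y ⊗ FD.C) Z).hom ≫ (X ◁ (α_ Y FD.C Z).hom)) := by monoidal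
    have hexp : (α_ X Y Z).hom ≫ (X ◁ cotA FD rY lZ) ≫ (α_ X Y Z).inv
        = (α_ X Y Z).hom ≫ (X ◁ ((rY ▷ Z) ≫ (α_ Y FD.C Z).hom)) ≫
          (X ◁ (Y ◁ cotPhi FD lZ)) ≫ (α_ X Y Z).inv := by
      rw [cotA_eq FD rY lZ]
      simp only [MonoidalCategory.whiskerLeft_comp, Category.assoc]
    rw [hexp, reassoc_of% tg1', reassoc_of% hg, ← reassoc_of% tg2']
    simp only [Category.assoc, ← MonoidalCategory.whiskerLeft_comp_assoc,
      ← MonoidalCategory.whiskerLeft_comp]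
    rw [phi_lY FD lZ hZcoassoc hZcounit]
    simp
  exact pack _ _ _ _ _ _ hcomm h1 h2 he1 he2 hb1 hb2
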